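/- Let F be a field and d, k natural numbers with 1 ≤ k and k + 1 ≤ d. Let ℋ be a set of submodules of Fin (d+1) → F, each of finrank k+1, which is a generator set with respect to co-k-subspaces (for every submodule Π of finrank d+1−k, ⨆_{H ∈ ℋ} (H ⊓ Π) = Π). Suppose there exists a submodule W with finrank W = d − k such that H ⊓ W ≠ ⊥ for every H ∈ ℋ. Then, if ℋ is a finite set, the field F is finite and Set.ncard ℋ ≥ Nat.card F + 1 (in particular, if F is infinite then ℋ must be infinite). -/

import Mathlib

open Module

theorem stmt_1 (F : Type*) [Field F] (d k : ℕ) (hk : 1 ≤ k) (hkd : k + 1 ≤ d)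
    (ℋ : Set (Submodule F (Fin (d + 1) → F)))
    (hrank : ∀ H ∈ ℋ, finrank F H = k + 1)
    (hgen : ∀ P : Submodule F (Fin (d + 1) → F), finrank F P = d + 1 - k →
      (⨆ H ∈ ℋ, H ⊓ P) = P)
    (hW : ∃ W : Submodule F (Fin (d + 1) → F), finrank F W = d - k ∧
      ∀ H ∈ ℋ, H ⊓ W ≠ ⊥)
    (hfin : ℋ.Finite) :
    Finite F ∧ Nat.card F + 1 ≤ Set.ncard ℋ := by
  classical
  obtain ⟨W, hWr, hWint⟩ := hW
  have hVrank : finrank F (Fin (d + 1) → F) = d + 1 := finrank_fin_fun F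
  set π := W.mkQ with hπ
  have hUrank : finrank F ((Fin (d + 1) → F) ⧸ W) = k + 1 := by
    have h := Submodule.finrank_quotient_add_finrank W
    rw [hVrank, hWr] at h
    omega
  -- each image of an `H ∈ ℋ` in the quotient is a proper subspace
  have hsmall : ∀ H ∈ ℋ, finrank F (H.map π) ≤ k := by
    intro H hH
    have h1 := LinearMap.finrank_range_add_finrank_ker (π.domRestrict H)
    rw [LinearMap.range_domRestrict] at h1
    have hkerpos : 0 < finrank F (LinearMap.ker (π.domRestrict H)) := by
      obtain ⟨x, hxm, hx0⟩ := Submodule.exists_mem_ne_zero_of_ne_bot (hWint H hH)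
      have hxH : x ∈ H := hxm.1
      have hxker : (⟨x, hxH⟩ : H) ∈ LinearMap.ker (π.domRestrict H) := by
        show π x = 0
        exact (Submodule.Quotient.mk_eq_zero W).2 hxm.2
      refine (Module.finrank_pos_iff_exists_ne_zero (R := F) (M := LinearMap.ker (π.domRestrict H))).mpr ⟨⟨⟨x, hxH⟩, hxker⟩, ?_⟩
      rw [Ne, Submodule.mk_eq_zero, Submodule.mk_eq_zero]
      exact hx0
    have hfr : finrank F H = k + 1 := hrank H hH
    rw [hfr] at h1
    omega
  -- covering property: every nonzero vector of the quotient lies in some image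
  have hcover : ∀ u : (Fin (d + 1) → F) ⧸ W, u ≠ 0 → ∃ H ∈ ℋ, u ∈ H.map π := by
    intro u hu
    obtain ⟨v, rfl⟩ := W.mkQ_surjective u
    have hvW : v ∉ W := fun h => hu ((Submodule.Quotient.mk_eq_zero W).2 h)
    have hv0 : v ≠ 0 := fun h => hvW (h ▸ W.zero_mem)
    have hinf : W ⊓ Submodule.span F {v} = ⊥ := by
      rw [eq_bot_iff]
      intro x hx
      rw [Submodule.mem_inf] at hx
      obtain ⟨hxW, hxs⟩ := hx
      obtain ⟨c, rfl⟩ := Submodule.mem_span_singleton.1 hxs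
      rcases eq_or_ne c 0 with rfl | hc
      · simp
      · exfalso
        apply hvW
        have h2 := W.smul_mem c⁻¹ hxW
        rwa [smul_smul, inv_mul_cancel₀ hc, one_smul] at h2
    have hPrank : finrank F ↥(W ⊔ Submodule.span F {v} : Submodule F (Fin (d + 1) → F)) = d + 1 - k := by
      have h := Submodule.finrank_sup_add_finrank_inf_eq W (Submodule.span F {v})
      rw [hinf, finrank_bot, finrank_span_singleton hv0, hWr] at h
      omega
    have hgenP := hgen (W ⊔ Submodule.span F {v}) hPrank
    have hvP : v ∈ W ⊔ Submodule.span F {v} := Submodule.mem_sup_right (Submodule.mem_span_singleton_self v)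
    have hex : ∃ H ∈ ℋ, ¬ (H ⊓ (W ⊔ Submodule.span F {v}) ≤ W) := by
      by_contra hcon
      push_neg at hcon
      have hle : W ⊔ Submodule.span F {v} ≤ W := by
        conv_lhs => rw [← hgenP]
        exact iSup₂_le hcon
      exact hvW (hle hvP)
    obtain ⟨H, hH, hHP⟩ := hex
    obtain ⟨h, hhHP, hhW⟩ := SetLike.not_le_iff_exists.1 hHP
    rw [Submodule.mem_inf] at hhHP
    have hπP : (W ⊔ Submodule.span F {v}).map π = Submodule.span F {W.mkQ v} := by
      rw [Submodule.map_sup, Submodule.map_span, Set.image_singleton]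
      have hWbot : W.map π = ⊥ := by
        rw [eq_bot_iff]
        rintro x ⟨y, hy, rfl⟩
        show W.mkQ y ∈ (⊥ : Submodule F _)
        rw [Submodule.mem_bot, Submodule.mkQ_apply, Submodule.Quotient.mk_eq_zero]
        exact hy
      rw [hWbot, bot_sup_eq]
    have hπh : π h ∈ Submodule.span F {W.mkQ v} :=
      hπP ▸ Submodule.mem_map_of_mem hhHP.2
    obtain ⟨c, hc⟩ := Submodule.mem_span_singleton.1 hπh
    have hπh0 : π h ≠ 0 := fun h0 => hhW ((Submodule.Quotient.mk_eq_zero W).1 h0)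
    have hc0 : c ≠ 0 := by
      rintro rfl
      rw [zero_smul] at hc
      exact hπh0 hc.symm
    refine ⟨H, hH, ?_⟩
    have hmem : π h ∈ H.map π := Submodule.mem_map_of_mem hhHP.1
    have hmem2 := (H.map π).smul_mem c⁻¹ hmem
    have heq : W.mkQ v = c⁻¹ • π h := by
      rw [← hc, smul_smul, inv_mul_cancel₀ hc0, one_smul]
    rwa [heq]
  -- ℋ is nonempty
  have hUnontriv : Nontrivial ((Fin (d + 1) → F) ⧸ W) :=
    Module.nontrivial_of_finrank_pos (R := F) (by omega : 0 < finrank F ((Fin (d + 1) → F) ⧸ W))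
  have hne : ℋ.Nonempty := by
    obtain ⟨u, hu⟩ := exists_ne (0 : (Fin (d + 1) → F) ⧸ W)
    obtain ⟨H, hH, -⟩ := hcover u hu
    exact ⟨H, hH⟩
  -- the images cover the whole quotient
  set s' : Finset (Subspace F ((Fin (d + 1) → F) ⧸ W)) :=
    hfin.toFinset.image (fun H => H.map π) with hs'
  have hcovset : ⋃ p ∈ s', (p : Set ((Fin (d + 1) → F) ⧸ W)) = Set.univ := by
    ext u
    simp only [Set.mem_univ, iff_true, Set.mem_iUnion]
    rcases eq_or_ne u 0 with rfl | hu
    · obtain ⟨H, hH⟩ := hne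
      have hmem : H.map π ∈ s' := by
        rw [hs']
        exact Finset.mem_image_of_mem _ (hfin.mem_toFinset.2 hH)
      exact ⟨H.map π, hmem, (H.map π).zero_mem⟩
    · obtain ⟨H, hH, hu'⟩ := hcover u hu
      have hmem : H.map π ∈ s' := by
        rw [hs']
        exact Finset.mem_image_of_mem _ (hfin.mem_toFinset.2 hH)
      exact ⟨H.map π, hmem, hu'⟩
  -- F is finite
  have hFfin : Finite F := by
    by_contra hinf
    rw [not_finite_iff_infinite] at hinf
    have htop := Subspace.top_mem_of_biUnion_eq_univ hcovset
    rw [hs', Finset.mem_image] at htop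
    obtain ⟨H, hHs, hHtop⟩ := htop
    have hsm := hsmall H (hfin.mem_toFinset.1 hHs)
    rw [hHtop, finrank_top] at hsm
    omega
  refine ⟨hFfin, ?_⟩
  -- counting argument
  have : Fintype F := Fintype.ofFinite F
  have hUfinite : Finite ((Fin (d + 1) → F) ⧸ W) := Module.finite_of_finite F
  have : Fintype ((Fin (d + 1) → F) ⧸ W) := Fintype.ofFinite _
  set q := Fintype.card F with hq
  have hq2 : 2 ≤ q := Fintype.one_lt_card
  have hcardU : Fintype.card ((Fin (d + 1) → F) ⧸ W) = q ^ (k + 1) := by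
    rw [card_eq_pow_finrank (K := F), hUrank]
  set s := hfin.toFinset with hs
  set t : Submodule F (Fin (d + 1) → F) → Finset ((Fin (d + 1) → F) ⧸ W) :=
    fun H => ((H.map π : Set ((Fin (d + 1) → F) ⧸ W))).toFinite.toFinset.erase 0 with ht
  have hcovF : Finset.univ.erase (0 : (Fin (d + 1) → F) ⧸ W) ⊆ s.biUnion t := by
    intro u hu
    have hu0 : u ≠ 0 := (Finset.mem_erase.1 hu).1
    obtain ⟨H, hH, huH⟩ := hcover u hu0
    exact Finset.mem_biUnion.2 ⟨H, hfin.mem_toFinset.2 hH,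
      Finset.mem_erase.2 ⟨hu0, (Set.Finite.mem_toFinset _).2 huH⟩⟩
  have h1 : (Finset.univ.erase (0 : (Fin (d + 1) → F) ⧸ W)).card = q ^ (k + 1) - 1 := by
    rw [Finset.card_erase_of_mem (Finset.mem_univ _), Finset.card_univ, hcardU]
  have h2 : ∀ H ∈ s, (t H).card ≤ q ^ k - 1 := by
    intro H hHs
    have hH := hfin.mem_toFinset.1 hHs
    have hfty : Fintype (H.map π) := Fintype.ofFinite _
    have hle : Nat.card (H.map π) ≤ q ^ k := by
      rw [Nat.card_eq_fintype_card, card_eq_pow_finrank (K := F)]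
      exact Nat.pow_le_pow_right (by omega) (hsmall H hH)
    have hc : ((H.map π : Set ((Fin (d + 1) → F) ⧸ W))).toFinite.toFinset.card
        = Nat.card (H.map π) := by
      rw [← Set.ncard_eq_toFinset_card, ← Nat.card_coe_set_eq]
      exact Nat.card_congr ⟨id, id, fun _ => rfl, fun _ => rfl⟩
    have h0mem : (0 : (Fin (d + 1) → F) ⧸ W) ∈
        ((H.map π : Set ((Fin (d + 1) → F) ⧸ W))).toFinite.toFinset :=
      (Set.Finite.mem_toFinset _).2 (H.map π).zero_mem
    calc (t H).card
        = ((H.map π : Set ((Fin (d + 1) → F) ⧸ W))).toFinite.toFinset.card - 1 :=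
          Finset.card_erase_of_mem h0mem
      _ ≤ q ^ k - 1 := by rw [hc]; omega
  have hkey : q ^ (k + 1) - 1 ≤ Set.ncard ℋ * (q ^ k - 1) := by
    calc q ^ (k + 1) - 1 = (Finset.univ.erase (0 : (Fin (d + 1) → F) ⧸ W)).card := h1.symm
      _ ≤ (s.biUnion t).card := Finset.card_le_card hcovF
      _ ≤ ∑ H ∈ s, (t H).card := Finset.card_biUnion_le
      _ ≤ ∑ _H ∈ s, (q ^ k - 1) := Finset.sum_le_sum h2
      _ = s.card * (q ^ k - 1) := by rw [Finset.sum_const, smul_eq_mul]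
      _ = Set.ncard ℋ * (q ^ k - 1) := by rw [Set.ncard_eq_toFinset_card ℋ hfin]
  -- final arithmetic
  rw [Nat.card_eq_fintype_card, ← hq]
  by_contra hlt
  push_neg at hlt
  have hn : Set.ncard ℋ ≤ q := by omega
  have hQ : q ≤ q ^ k := by
    calc q = q ^ 1 := (pow_one q).symm
      _ ≤ q ^ k := Nat.pow_le_pow_right (by omega) hk
  have h4 : Set.ncard ℋ * (q ^ k - 1) ≤ q * (q ^ k - 1) :=
    Nat.mul_le_mul_right _ hn
  have h5 : q * (q ^ k - 1) + q * 1 = q * q ^ k := by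
    rw [← Nat.mul_add]
    congr 1
    omega
  have h6 : q ^ (k + 1) = q * q ^ k := by ring
  omega
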